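/- (Graham–Knuth–Patashnik's identity) For all natural numbers m and n with n ≤ m and all complex numbers r, x, y, the sum over k from 0 to m−n of C(m+r, m−n−k)·binom(n+k, n)·x^{m−n−k}·y^k equals the sum over k from 0 to m−n of C(−r, m−n−k)·binom(n+k, n)·(−x)^{m−n−k}·(x+y)^k, where binom(n+k,n) denotes the ordinary binomial coefficient of natural numbers. -/

import Mathlib

/-- The generalized binomial coefficient `C(x, k) = x(x-1)⋯(x-k+1)/k!` for `x : ℂ`. -/
noncomputable def genBinom (x : ℂ) (k : ℕ) : ℂ := (∏ i ∈ Finset.range k, (x - i)) / (Nat.factorial k)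

open Finset

lemma prod_eq_descPoch (x : ℂ) (k : ℕ) :
    ∏ i ∈ Finset.range k, (x - i) = (descPochhammer ℂ k).eval x := by
  induction k with
  | zero => simp
  | succ k ih => rw [Finset.prod_range_succ, ih, descPochhammer_succ_eval]

lemma genBinom_eq_choose (x : ℂ) (k : ℕ) : genBinom x k = Ring.choose x k := by
  have h : (descPochhammer ℤ k).smeval x = (k.factorial : ℂ) * Ring.choose x k := by
    rw [Ring.descPochhammer_eq_factorial_smul_choose, nsmul_eq_mul]
  rw [genBinom, prod_eq_descPoch]
  have h2 : (descPochhammer ℂ k).eval x = (descPochhammer ℤ k).smeval x := by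
    rw [Polynomial.descPochhammer_smeval_eq_ascPochhammer,
      Polynomial.ascPochhammer_smeval_eq_eval, descPochhammer_eval_eq_ascPochhammer]
  rw [h2, h]
  rw [mul_comm, mul_div_cancel_right₀ _ (by exact_mod_cast Nat.factorial_ne_zero k)]

lemma genBinom_natCast (N k : ℕ) : genBinom (N : ℂ) k = (N.choose k : ℂ) := by
  rw [genBinom_eq_choose, Ring.choose_natCast]

/-- Upper negation. -/
lemma genBinom_neg (x : ℂ) (k : ℕ) :
    genBinom (-x) k = (-1 : ℂ) ^ k * genBinom (x + k - 1) k := by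
  unfold genBinom
  have h1 : ∏ i ∈ range k, (-x - (i : ℂ)) = (-1 : ℂ) ^ k * ∏ i ∈ range k, (x + i) :=
    calc ∏ i ∈ range k, (-x - (i : ℂ)) = ∏ i ∈ range k, (-1) * (x + i) :=
          prod_congr rfl (fun i _ => by ring)
      _ = (-1 : ℂ) ^ k * ∏ i ∈ range k, (x + i) := by
          rw [prod_mul_distrib, prod_const, card_range]
  have h2 : ∏ i ∈ range k, (x + (k : ℂ) - 1 - i) = ∏ i ∈ range k, (x + i) := by
    rw [← Finset.prod_range_reflect (fun i => x + (i : ℂ)) k]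
    refine prod_congr rfl fun i hi => ?_
    have hik : i < k := mem_range.mp hi
    have hc : ((k - 1 - i : ℕ) : ℂ) = (k : ℂ) - 1 - i := by
      have h3 : (k - 1 - i : ℕ) = k - (i + 1) := by omega
      rw [h3, Nat.cast_sub hik]
      push_cast
      ring
    simp only [hc]
    ring
  rw [h1, h2, mul_div_assoc]

/-- Vandermonde for genBinom. -/
lemma genBinom_add (a b : ℂ) (L : ℕ) :
    genBinom (a + b) L = ∑ i ∈ range (L + 1), genBinom a i * genBinom b (L - i) := by
  simp only [genBinom_eq_choose]
  rw [Ring.add_choose_eq L (Commute.all a b), Finset.Nat.sum_antidiagonal_eq_sum_range_succ_mk]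

lemma genBinom_star (p L : ℕ) (r : ℂ) :
    ∑ i ∈ range (L + 1), genBinom (-r) (L - i) * ((p + i).choose p : ℂ) * (-1 : ℂ) ^ (L - i)
      = genBinom ((p : ℂ) + L + r) L := by
  have hneg1 : ∀ i : ℕ, ((p + i).choose p : ℂ) = (-1 : ℂ) ^ i * genBinom (-((p : ℂ) + 1)) i := by
    intro i
    have h := genBinom_neg ((p : ℂ) + 1) i
    have h2 : (p : ℂ) + 1 + i - 1 = ((p + i : ℕ) : ℂ) := by push_cast; ring
    rw [h2, genBinom_natCast] at h
    rw [Nat.choose_symm_add, h]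
    rw [← mul_assoc, ← pow_add]
    simp [pow_add, ← two_mul, pow_mul]
  have hstep : ∀ i ∈ range (L + 1),
      genBinom (-r) (L - i) * ((p + i).choose p : ℂ) * (-1 : ℂ) ^ (L - i)
        = (-1 : ℂ) ^ L * (genBinom (-((p : ℂ) + 1)) i * genBinom (-r) (L - i)) := by
    intro i hi
    have hiL : i ≤ L := Nat.lt_succ_iff.mp (mem_range.mp hi)
    rw [hneg1 i]
    have : (-1 : ℂ) ^ i * (-1 : ℂ) ^ (L - i) = (-1 : ℂ) ^ L := by
      rw [← pow_add, Nat.add_sub_cancel' hiL]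
    rw [← this]
    ring
  rw [sum_congr rfl hstep, ← mul_sum, ← genBinom_add]
  have h3 : -((p : ℂ) + 1) + -r = -((p : ℂ) + 1 + r) := by ring
  rw [h3, genBinom_neg, ← mul_assoc, ← pow_add]
  have h4 : (p : ℂ) + 1 + r + L - 1 = (p : ℂ) + L + r := by ring
  rw [h4]
  simp [pow_add, ← two_mul, pow_mul]

lemma key_inner (n M j : ℕ) (hj : j ≤ M) (r : ℂ) :
    ∑ i ∈ range (M - j + 1),
      genBinom (-r) (M - j - i) * ((n + (j + i)).choose n : ℂ) * (-1 : ℂ) ^ (M - j - i) *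
        ((j + i).choose j : ℂ)
      = genBinom ((n : ℂ) + M + r) (M - j) * ((n + j).choose n : ℂ) := by
  set L := M - j with hL
  have htri : ∀ i : ℕ, ((n + (j + i)).choose n : ℂ) * ((j + i).choose j : ℂ)
      = ((n + (j + i)).choose (n + j) : ℂ) * ((n + j).choose n : ℂ) := by
    intro i
    have h := Nat.choose_mul (n := n + j + i) (k := n + j) (s := n)
      (by omega)
    have h1 : (n + j + i).choose (n + j) * (n + j).choose n
        = (n + j + i).choose n * (n + j + i - n).choose (n + j - n) := h
    have h2 : n + j + i - n = j + i := by omega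
    have h3 : n + j - n = j := by omega
    have h4 : n + j + i = n + (j + i) := by omega
    rw [h2, h3, h4] at h1
    exact_mod_cast h1.symm
  have hstep : ∀ i ∈ range (L + 1),
      genBinom (-r) (L - i) * ((n + (j + i)).choose n : ℂ) * (-1 : ℂ) ^ (L - i) *
          ((j + i).choose j : ℂ)
        = (genBinom (-r) (L - i) * (((n + j) + i).choose (n + j) : ℂ) * (-1 : ℂ) ^ (L - i)) *
            ((n + j).choose n : ℂ) := by
    intro i _
    have := htri i
    calc genBinom (-r) (L - i) * ((n + (j + i)).choose n : ℂ) * (-1 : ℂ) ^ (L - i) *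
          ((j + i).choose j : ℂ)
        = genBinom (-r) (L - i) * (-1 : ℂ) ^ (L - i) *
            (((n + (j + i)).choose n : ℂ) * ((j + i).choose j : ℂ)) := by ring
      _ = genBinom (-r) (L - i) * (-1 : ℂ) ^ (L - i) *
            (((n + (j + i)).choose (n + j) : ℂ) * ((n + j).choose n : ℂ)) := by rw [this]
      _ = _ := by rw [show n + j + i = n + (j + i) by omega]; ring
  rw [sum_congr rfl hstep, ← sum_mul, genBinom_star]
  have hc : ((n + j : ℕ) : ℂ) + (L : ℂ) + r = (n : ℂ) + M + r := by
    have : ((L : ℕ) : ℂ) = (M : ℂ) - (j : ℂ) := by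
      rw [hL, Nat.cast_sub hj]
    rw [this]
    push_cast
    ring
  rw [hc]

/-- Graham–Knuth–Patashnik's identity. -/
theorem gkp_identity (m n : ℕ) (hnm : n ≤ m) (r x y : ℂ) :
    ∑ k ∈ Finset.range (m - n + 1),
        genBinom ((m : ℂ) + r) (m - n - k) * ((n + k).choose n : ℂ) * x ^ (m - n - k) * y ^ k =
      ∑ k ∈ Finset.range (m - n + 1),
        genBinom (-r) (m - n - k) * ((n + k).choose n : ℂ) * (-x) ^ (m - n - k) *
          (x + y) ^ k := by
  obtain ⟨M, rfl⟩ := Nat.exists_eq_add_of_le hnm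
  simp only [Nat.add_sub_cancel_left]
  have hcast : ((n + M : ℕ) : ℂ) = (n : ℂ) + (M : ℂ) := by push_cast; ring
  rw [hcast]
  symm
  calc ∑ k ∈ range (M + 1),
        genBinom (-r) (M - k) * ((n + k).choose n : ℂ) * (-x) ^ (M - k) * (x + y) ^ k
      = ∑ k ∈ range (M + 1), ∑ j ∈ range (k + 1),
          genBinom (-r) (M - k) * ((n + k).choose n : ℂ) * (-x) ^ (M - k) *
            (y ^ j * x ^ (k - j) * ((k.choose j : ℕ) : ℂ)) := by
        refine sum_congr rfl fun k _ => ?_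
        rw [show x + y = y + x from add_comm x y, add_pow, mul_sum]
    _ = ∑ j ∈ range (M + 1), ∑ k ∈ Ico j (M + 1),
          genBinom (-r) (M - k) * ((n + k).choose n : ℂ) * (-x) ^ (M - k) *
            (y ^ j * x ^ (k - j) * ((k.choose j : ℕ) : ℂ)) := by
        refine Finset.sum_comm' ?_
        intro k j
        simp only [mem_range, mem_Ico]
        omega
    _ = ∑ j ∈ range (M + 1), ∑ i ∈ range (M - j + 1),
          genBinom (-r) (M - (j + i)) * ((n + (j + i)).choose n : ℂ) * (-x) ^ (M - (j + i)) *
            (y ^ j * x ^ ((j + i) - j) * (((j + i).choose j : ℕ) : ℂ)) := by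
        refine sum_congr rfl fun j hj => ?_
        have hjM : j ≤ M := Nat.lt_succ_iff.mp (mem_range.mp hj)
        rw [Finset.sum_Ico_eq_sum_range, show M + 1 - j = M - j + 1 by omega]
    _ = ∑ j ∈ range (M + 1),
          (∑ i ∈ range (M - j + 1),
            genBinom (-r) (M - j - i) * ((n + (j + i)).choose n : ℂ) * (-1 : ℂ) ^ (M - j - i) *
              (((j + i).choose j : ℕ) : ℂ)) * (x ^ (M - j) * y ^ j) := by
        refine sum_congr rfl fun j hj => ?_
        have hjM : j ≤ M := Nat.lt_succ_iff.mp (mem_range.mp hj)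
        rw [sum_mul]
        refine sum_congr rfl fun i hi => ?_
        have hiL : i ≤ M - j := Nat.lt_succ_iff.mp (mem_range.mp hi)
        have h1 : M - (j + i) = M - j - i := by omega
        have h2 : (j + i) - j = i := by omega
        have h3 : (-x) ^ (M - j - i) = (-1 : ℂ) ^ (M - j - i) * x ^ (M - j - i) := by
          rw [neg_pow]
        have hx : x ^ (M - j - i) * x ^ i = x ^ (M - j) := by
          rw [← pow_add]
          congr 1
          omega
        rw [h1, h2, h3, ← hx]
        ring
    _ = ∑ j ∈ range (M + 1),
          genBinom ((n : ℂ) + M + r) (M - j) * ((n + j).choose n : ℂ) *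
            (x ^ (M - j) * y ^ j) := by
        refine sum_congr rfl fun j hj => ?_
        have hjM : j ≤ M := Nat.lt_succ_iff.mp (mem_range.mp hj)
        rw [key_inner n M j hjM r]
    _ = ∑ j ∈ range (M + 1),
          genBinom ((n : ℂ) + M + r) (M - j) * ((n + j).choose n : ℂ) * x ^ (M - j) * y ^ j := by
        refine sum_congr rfl fun j _ => ?_
        ring
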